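/- Suppose Δ > 0, let c > 1, set T₀ = c·n·Δ, and let β_t = ln(⌊t/n⌋ + 1)/T₀ for t ≥ 0. Then the nonhomogeneous Markov chain on Aⁿ with transition matrices P^{(t)} = P_{β_t} is weakly ergodic: for all probability distributions μ, ν on Aⁿ and all n1 ≥ 0, lim_{n2→∞} ‖μP^{(n1,n2)} − νP^{(n1,n2)}‖₁ = 0. -/

import Mathlib

open Filter

/-- The Gibbs-sampler (heat bath) transition matrix at inverse temperature `β`
for the energy `E` on the state space `Fin n → A`: a coordinate `i` is chosen
uniformly at random and resampled from the conditional Boltzmann distribution. -/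
noncomputable def gibbs {A : Type*} [Fintype A] [DecidableEq A]
    (n : ℕ) (E : (Fin n → A) → ℝ) (β : ℝ) :
    Matrix (Fin n → A) (Fin n → A) ℝ := fun u v =>
  (∑ i : Fin n,
    if ∀ j, j ≠ i → v j = u j then
      Real.exp (-β * E v) / ∑ b : A, Real.exp (-β * E (Function.update u i b))
    else 0) / n

/-- The maximal change of the energy `E` when a single coordinate is modified. -/
noncomputable def energySpan {A : Type*} [Fintype A] [DecidableEq A]
    (n : ℕ) (E : (Fin n → A) → ℝ) : ℝ :=
  ⨆ q : (Fin n → A) × Fin n × A × A,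
    |E (Function.update q.1 q.2.1 q.2.2.1) - E (Function.update q.1 q.2.1 q.2.2.2)|

/-- The ℓ¹ distance between two vectors on a finite index set. -/
noncomputable def l1 {S : Type*} [Fintype S] (u v : S → ℝ) : ℝ :=
  ∑ k, |u k - v k|

/-- A probability distribution (row vector) on a finite state space. -/
def IsDist {S : Type*} [Fintype S] (μ : S → ℝ) : Prop :=
  (∀ k, 0 ≤ μ k) ∧ ∑ k, μ k = 1

/-- The product `P^{(n1,n2)} = P^{(n1)} P^{(n1+1)} ⋯ P^{(n2−1)}` of the transition
matrices of a nonhomogeneous Markov chain. -/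
noncomputable def Pprod {S : Type*} [Fintype S] [DecidableEq S]
    (P : ℕ → Matrix S S ℝ) (n1 n2 : ℕ) : Matrix S S ℝ :=
  ((List.range (n2 - n1)).map fun t => P (n1 + t)).prod

set_option linter.unusedSectionVars false

section stochAux
variable {S : Type*} [Fintype S] [DecidableEq S]

/-- Row-stochasticity of a matrix. -/
def SAStoch (P : Matrix S S ℝ) : Prop := (∀ u v, 0 ≤ P u v) ∧ ∀ u, ∑ v, P u v = 1

lemma SAStoch.one : SAStoch (1 : Matrix S S ℝ) := by
  constructor
  · intro u v; by_cases h : u = v <;> simp [Matrix.one_apply, h]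
  · intro u; simp [Matrix.one_apply]

lemma SAStoch.mul {P Q : Matrix S S ℝ} (hP : SAStoch P) (hQ : SAStoch Q) : SAStoch (P * Q) := by
  constructor
  · intro u v
    rw [Matrix.mul_apply]
    exact Finset.sum_nonneg fun w _ => mul_nonneg (hP.1 u w) (hQ.1 w v)
  · intro u
    simp only [Matrix.mul_apply]
    rw [Finset.sum_comm]
    simp only [← Finset.mul_sum, hQ.2, mul_one]
    exact hP.2 u

lemma SAStoch.listProd : ∀ L : List (Matrix S S ℝ), (∀ M ∈ L, SAStoch M) → SAStoch L.prod
  | [], _ => by simpa using SAStoch.one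
  | (M :: L), h => by
      rw [List.prod_cons]
      exact (h M List.mem_cons_self).mul
        (SAStoch.listProd L fun N hN => h N (List.mem_cons_of_mem M hN))

lemma SAStoch.pow {M : Matrix S S ℝ} (hM : SAStoch M) (m : ℕ) : SAStoch (M ^ m) := by
  induction m with
  | zero => simpa using SAStoch.one
  | succ m ih => rw [pow_succ]; exact ih.mul hM

lemma sum_vecMul_eq {P : Matrix S S ℝ} (hP : SAStoch P) (w : S → ℝ) :
    ∑ v, (Matrix.vecMul w P) v = ∑ u, w u := by
  simp only [Matrix.vecMul, dotProduct]
  rw [Finset.sum_comm]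
  simp only [← Finset.mul_sum, hP.2, mul_one]

lemma l1_vecMul_le {P : Matrix S S ℝ} (hP : SAStoch P) (w : S → ℝ) :
    ∑ v, |(Matrix.vecMul w P) v| ≤ ∑ u, |w u| := by
  calc ∑ v, |(Matrix.vecMul w P) v| ≤ ∑ v, ∑ u, |w u| * P u v := by
        refine Finset.sum_le_sum fun v _ => ?_
        refine (Finset.abs_sum_le_sum_abs _ _).trans ?_
        refine le_of_eq (Finset.sum_congr rfl fun u _ => ?_)
        rw [abs_mul]
        congr 1
        exact abs_of_nonneg (hP.1 u v)
    _ = ∑ u, |w u| := by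
        rw [Finset.sum_comm]
        simp only [← Finset.mul_sum, hP.2, mul_one]

lemma l1_vecMul_contract {P : Matrix S S ℝ} (hP : SAStoch P) {ε : ℝ} (hε : 0 ≤ ε)
    (hPe : ∀ u v, ε ≤ P u v) (w : S → ℝ) (hw : ∑ u, w u = 0) [Nonempty S] :
    ∑ v, |(Matrix.vecMul w P) v| ≤ (1 - ε) * ∑ u, |w u| := by
  have hcard : (1:ℝ) ≤ Fintype.card S := by exact_mod_cast Fintype.card_pos
  have key : ∀ v, |(Matrix.vecMul w P) v| ≤ ∑ u, |w u| * (P u v - ε) := by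
    intro v
    have h1 : (Matrix.vecMul w P) v = ∑ u, w u * (P u v - ε) := by
      simp only [Matrix.vecMul, dotProduct, mul_sub]
      rw [Finset.sum_sub_distrib, ← Finset.sum_mul, hw, zero_mul, sub_zero]
    rw [h1]
    refine (Finset.abs_sum_le_sum_abs _ _).trans (le_of_eq ?_)
    refine Finset.sum_congr rfl fun u _ => ?_
    rw [abs_mul]
    congr 1
    exact abs_of_nonneg (by linarith [hPe u v])
  calc ∑ v, |(Matrix.vecMul w P) v| ≤ ∑ v, ∑ u, |w u| * (P u v - ε) :=
        Finset.sum_le_sum fun v _ => key v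
    _ = (1 - ε * Fintype.card S) * ∑ u, |w u| := by
        rw [Finset.sum_comm, Finset.mul_sum]
        refine Finset.sum_congr rfl fun u _ => ?_
        rw [← Finset.mul_sum, Finset.sum_sub_distrib, hP.2, Finset.sum_const,
          Finset.card_univ, nsmul_eq_mul]
        ring
    _ ≤ (1 - ε) * ∑ u, |w u| := by
        apply mul_le_mul_of_nonneg_right
        · nlinarith
        · exact Finset.sum_nonneg fun u _ => abs_nonneg _
end stochAux

section pprodAux
variable {S : Type*} [Fintype S] [DecidableEq S] (P : ℕ → Matrix S S ℝ)

lemma Pprod_self (a : ℕ) : Pprod P a a = 1 := by simp [Pprod]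

lemma Pprod_succ {a b : ℕ} (h : a ≤ b) : Pprod P a (b + 1) = Pprod P a b * P b := by
  unfold Pprod
  rw [Nat.succ_sub h, List.range_succ, List.map_append, List.prod_append]
  simp [Nat.add_sub_cancel' h]

lemma Pprod_split {a b c : ℕ} (hab : a ≤ b) (hbc : b ≤ c) :
    Pprod P a c = Pprod P a b * Pprod P b c := by
  induction c, hbc using Nat.le_induction with
  | base => rw [Pprod_self, mul_one]
  | succ c hbc ih =>
      rw [Pprod_succ P (hab.trans hbc), Pprod_succ P hbc, ih, mul_assoc]

lemma Pprod_const {a m : ℕ} {M : Matrix S S ℝ} (h : ∀ t, t < m → P (a + t) = M) :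
    Pprod P a (a + m) = M ^ m := by
  unfold Pprod
  rw [Nat.add_sub_cancel_left]
  rw [show (List.range m).map (fun t => P (a + t)) = List.replicate m M from ?_,
    List.prod_replicate]
  rw [List.eq_replicate_iff]
  constructor
  · simp
  · intro b hb
    simp only [List.mem_map, List.mem_range] at hb
    obtain ⟨t, ht, rfl⟩ := hb
    exact h t ht

lemma Pprod_stoch (hP : ∀ t, SAStoch (P t)) (a b : ℕ) : SAStoch (Pprod P a b) := by
  refine SAStoch.listProd _ fun M hM => ?_
  simp only [List.mem_map, List.mem_range] at hM
  obtain ⟨t, _, rfl⟩ := hM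
  exact hP _
end pprodAux

section gibbsAux
variable {A : Type*} [Fintype A] [DecidableEq A] [Nonempty A] {n : ℕ}
  (E : (Fin n → A) → ℝ)

lemma sum_cond_update (u : Fin n → A) (i : Fin n) (f : (Fin n → A) → ℝ) :
    ∑ v : Fin n → A, (if ∀ j, j ≠ i → v j = u j then f v else 0)
      = ∑ b : A, f (Function.update u i b) := by
  classical
  rw [← Finset.sum_filter]
  have hfix : ∀ v : Fin n → A, (∀ j, j ≠ i → v j = u j) → Function.update u i (v i) = v := by
    intro v hv
    funext j
    by_cases h : j = i
    · subst h; simp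
    · rw [Function.update_of_ne h]; exact (hv j h).symm
  refine Finset.sum_nbij' (i := fun v => v i) (j := fun b => Function.update u i b)
    ?_ ?_ ?_ ?_ ?_
  · intro v hv; exact Finset.mem_univ _
  · intro b hb
    simp only [Finset.mem_filter, Finset.mem_univ, true_and]
    intro j hj
    exact Function.update_of_ne hj b u
  · intro v hv
    simp only [Finset.mem_filter, Finset.mem_univ, true_and] at hv
    exact hfix v hv
  · intro b hb; simp
  · intro v hv
    simp only [Finset.mem_filter, Finset.mem_univ, true_and] at hv
    rw [hfix v hv]

lemma Zpos (β : ℝ) (u : Fin n → A) (i : Fin n) :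
    0 < ∑ b : A, Real.exp (-β * E (Function.update u i b)) :=
  Finset.sum_pos (fun b _ => Real.exp_pos _) Finset.univ_nonempty

lemma gibbs_stoch (hn : 0 < n) (β : ℝ) : SAStoch (gibbs n E β) := by
  constructor
  · intro u v
    apply div_nonneg _ (Nat.cast_nonneg n)
    refine Finset.sum_nonneg fun i _ => ?_
    split
    · exact div_nonneg (Real.exp_pos _).le (Zpos E β u i).le
    · exact le_rfl
  · intro u
    simp only [gibbs, ← Finset.sum_div]
    rw [Finset.sum_comm]
    have : ∀ i : Fin n, ∑ v : Fin n → A,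
        (if ∀ j, j ≠ i → v j = u j then
          Real.exp (-β * E v) / ∑ b : A, Real.exp (-β * E (Function.update u i b))
        else 0) = 1 := by
      intro i
      rw [sum_cond_update u i]
      rw [← Finset.sum_div]
      exact div_self (Zpos E β u i).ne'
    simp only [this, Finset.sum_const, Finset.card_univ, Fintype.card_fin, nsmul_eq_mul,
      mul_one]
    exact div_self (by exact_mod_cast hn.ne')

lemma abs_sub_le_energySpan (hn : 0 < n) (w : Fin n → A) (i : Fin n) (a b : A) :
    |E (Function.update w i a) - E (Function.update w i b)| ≤ energySpan n E := by
  have : Nonempty (Fin n) := Fin.pos_iff_nonempty.mp hn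
  exact le_ciSup (f := fun q : (Fin n → A) × Fin n × A × A =>
    |E (Function.update q.1 q.2.1 q.2.2.1) - E (Function.update q.1 q.2.1 q.2.2.2)|)
    (Set.Finite.bddAbove (Set.finite_range _)) ⟨w, i, a, b⟩

lemma gibbs_lb (hn : 0 < n) {β : ℝ} (hβ : 0 ≤ β) (u : Fin n → A) (i : Fin n) (b : A) :
    Real.exp (-β * energySpan n E) / (n * Fintype.card A)
      ≤ gibbs n E β u (Function.update u i b) := by
  set v := Function.update u i b with hv
  set Z := ∑ b' : A, Real.exp (-β * E (Function.update u i b')) with hZ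
  have hZub : Z ≤ Fintype.card A * (Real.exp (β * energySpan n E) * Real.exp (-β * E v)) := by
    rw [hZ]
    calc ∑ b' : A, Real.exp (-β * E (Function.update u i b'))
        ≤ ∑ _b' : A, Real.exp (β * energySpan n E) * Real.exp (-β * E v) := by
          refine Finset.sum_le_sum fun b' _ => ?_
          rw [← Real.exp_add]
          apply Real.exp_le_exp.mpr
          have h1 : |E (Function.update u i b') - E (Function.update u i b)| ≤ energySpan n E :=
            abs_sub_le_energySpan E hn u i b' b
          have h2 : E v - E (Function.update u i b') ≤ energySpan n E := by
            rw [hv]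
            have := abs_le.mp h1
            linarith [this.1]
          nlinarith
      _ = Fintype.card A * (Real.exp (β * energySpan n E) * Real.exp (-β * E v)) := by
          rw [Finset.sum_const, Finset.card_univ, nsmul_eq_mul]
  have hterm : Real.exp (-β * energySpan n E) / Fintype.card A ≤ Real.exp (-β * E v) / Z := by
    have hcard : (0:ℝ) < Fintype.card A := by exact_mod_cast Fintype.card_pos
    rw [div_le_div_iff₀ (by positivity) (Zpos E β u i)]
    calc Real.exp (-β * energySpan n E) * Z
        ≤ Real.exp (-β * energySpan n E) *
            (Fintype.card A * (Real.exp (β * energySpan n E) * Real.exp (-β * E v))) :=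
          mul_le_mul_of_nonneg_left hZub (Real.exp_pos _).le
      _ = Real.exp (-β * E v) * Fintype.card A := by
          have e1 : Real.exp (-β * energySpan n E) * Real.exp (β * energySpan n E) = 1 := by
            rw [← Real.exp_add, show -β * energySpan n E + β * energySpan n E = 0 by ring,
              Real.exp_zero]
          linear_combination (↑(Fintype.card A) * Real.exp (-β * E v)) * e1
  have hnR : (0:ℝ) < n := by exact_mod_cast hn
  have hmain : Real.exp (-β * E v) / Z / n ≤ gibbs n E β u v := by
    unfold gibbs
    gcongr
    have hcond : ∀ j, j ≠ i → v j = u j := fun j hj => Function.update_of_ne hj b u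
    calc Real.exp (-β * E v) / Z
        = (if ∀ j, j ≠ i → v j = u j then
            Real.exp (-β * E v) / ∑ b' : A, Real.exp (-β * E (Function.update u i b'))
          else 0) := by rw [if_pos hcond]
      _ ≤ _ := by
          refine Finset.single_le_sum (f := fun i' : Fin n =>
            if ∀ j, j ≠ i' → v j = u j then
              Real.exp (-β * E v) / ∑ b' : A, Real.exp (-β * E (Function.update u i' b'))
            else 0) (fun i' _ => ?_) (Finset.mem_univ i)
          split
          · exact div_nonneg (Real.exp_pos _).le (Zpos E β u i').le
          · exact le_rfl
  calc Real.exp (-β * energySpan n E) / (n * Fintype.card A)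
      = (Real.exp (-β * energySpan n E) / Fintype.card A) / n := by ring
    _ ≤ Real.exp (-β * E v) / Z / n := by gcongr
    _ ≤ gibbs n E β u v := hmain

lemma pow_nonneg_entries (M : Matrix (Fin n → A) (Fin n → A) ℝ)
    (hM0 : ∀ u v, 0 ≤ M u v) (m : ℕ) : ∀ u v, 0 ≤ (M ^ m) u v := by
  induction m with
  | zero =>
      intro u v
      by_cases h : u = v <;> simp [Matrix.one_apply, h]
  | succ m ih =>
      intro u v
      rw [pow_succ', Matrix.mul_apply]
      exact Finset.sum_nonneg fun w _ => mul_nonneg (hM0 u w) (ih w v)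

lemma pow_entry_lb (hn : 0 < n) (M : Matrix (Fin n → A) (Fin n → A) ℝ)
    (hM0 : ∀ u v, 0 ≤ M u v) {δ : ℝ} (hδ : 0 ≤ δ)
    (hMδ : ∀ (u : Fin n → A) (i : Fin n) (b : A), δ ≤ M u (Function.update u i b)) :
    ∀ (m : ℕ) (u v : Fin n → A),
      (Finset.univ.filter (fun j => u j ≠ v j)).card ≤ m → δ ^ m ≤ (M ^ m) u v := by
  intro m
  induction m with
  | zero =>
      intro u v hcard
      have : u = v := by
        funext j
        by_contra h
        have h2 : 0 < (Finset.univ.filter (fun j => u j ≠ v j)).card :=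
          Finset.card_pos.mpr ⟨j, Finset.mem_filter.mpr ⟨Finset.mem_univ _, h⟩⟩
        omega
      subst this
      simp [Matrix.one_apply]
  | succ m ih =>
      intro u v hcard
      set D := Finset.univ.filter (fun j => u j ≠ v j) with hD
      obtain ⟨i, hi⟩ : ∃ i : Fin n, D = ∅ ∨ i ∈ D := by
        rcases Finset.eq_empty_or_nonempty D with h | ⟨i, hi⟩
        · exact ⟨⟨0, hn⟩, Or.inl h⟩
        · exact ⟨i, Or.inr hi⟩
      set w := Function.update u i (v i) with hw
      have hstep : δ ≤ M u w := by
        rw [hw]; exact hMδ u i (v i)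
      have hrest : δ ^ m ≤ (M ^ m) w v := by
        apply ih
        rcases hi with h | h
        · have huv : u = v := by
            funext j
            by_contra hne
            exact Finset.notMem_empty j (h ▸ Finset.mem_filter.mpr ⟨Finset.mem_univ _, hne⟩)
          have : w = v := by rw [hw, huv, Function.update_eq_self]
          rw [this]
          simp
        · have hsub : Finset.univ.filter (fun j => w j ≠ v j) ⊆ D.erase i := by
            intro j hj
            rw [Finset.mem_filter] at hj
            rw [Finset.mem_erase]
            constructor
            · rintro rfl
              exact hj.2 (by rw [hw, Function.update_self])
            · refine Finset.mem_filter.mpr ⟨Finset.mem_univ _, ?_⟩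
              intro hujvj
              refine hj.2 ?_
              by_cases hji : j = i
              · subst hji; rw [hw, Function.update_self]
              · rw [hw, Function.update_of_ne hji]; exact hujvj
          calc (Finset.univ.filter (fun j => w j ≠ v j)).card
              ≤ (D.erase i).card := Finset.card_le_card hsub
            _ = D.card - 1 := Finset.card_erase_of_mem h
            _ ≤ m := by omega
      calc δ ^ (m + 1) = δ * δ ^ m := by rw [pow_succ']
        _ ≤ M u w * (M ^ m) w v :=
            mul_le_mul hstep hrest (pow_nonneg hδ m) (hM0 u w)
        _ ≤ ((M : Matrix _ _ ℝ) ^ (m + 1)) u v := by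
            rw [pow_succ', Matrix.mul_apply]
            exact Finset.single_le_sum (f := fun w' => M u w' * (M ^ m) w' v)
              (fun w' _ => mul_nonneg (hM0 u w') (pow_nonneg_entries M hM0 m w' v))
              (Finset.mem_univ w)
end gibbsAux

/-- Weak ergodicity of the simulated annealing Gibbs sampler with the cooling
schedule `β_t = ln(⌊t/n⌋ + 1)/T₀`, `T₀ = c·n·Δ`, `c > 1`. -/
theorem gibbs_annealing_weaklyErgodic {A : Type*} [Fintype A] [DecidableEq A] [Nonempty A]
    (n : ℕ) (hn : 0 < n) (E : (Fin n → A) → ℝ) (hΔ : 0 < energySpan n E)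
    (c : ℝ) (hc : 1 < c) (T₀ : ℝ) (hT₀ : T₀ = c * n * energySpan n E) :
    ∀ μ ν : (Fin n → A) → ℝ, IsDist μ → IsDist ν → ∀ n1 : ℕ,
      Tendsto (fun n2 =>
          l1 (Matrix.vecMul μ
                (Pprod (fun t => gibbs n E (Real.log ((t / n + 1 : ℕ) : ℝ) / T₀)) n1 n2))
             (Matrix.vecMul ν
                (Pprod (fun t => gibbs n E (Real.log ((t / n + 1 : ℕ) : ℝ) / T₀)) n1 n2)))
        atTop (nhds 0) := by
  intro μ ν hμ hν n1
  classical
  set Δ := energySpan n E with hΔdef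
  have hnR : (0:ℝ) < n := by exact_mod_cast hn
  have hT₀pos : 0 < T₀ := by rw [hT₀]; positivity
  set P : ℕ → Matrix (Fin n → A) (Fin n → A) ℝ :=
    fun t => gibbs n E (Real.log ((t / n + 1 : ℕ) : ℝ) / T₀) with hPdef
  have hβ : ∀ m : ℕ, 0 ≤ Real.log ((m + 1 : ℕ) : ℝ) / T₀ := by
    intro m
    apply div_nonneg _ hT₀pos.le
    apply Real.log_nonneg
    exact_mod_cast Nat.one_le_iff_ne_zero.mpr (Nat.succ_ne_zero m)
  have hPstoch : ∀ t, SAStoch (P t) := fun t => gibbs_stoch E hn _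
  set w : (Fin n → A) → ℝ := μ - ν with hwdef
  have hwsum : ∑ u, w u = 0 := by
    simp only [hwdef, Pi.sub_apply, Finset.sum_sub_distrib, hμ.2, hν.2, sub_self]
  set D : ℕ → ℝ := fun m => ∑ v, |(Matrix.vecMul w (Pprod P n1 m)) v| with hDdef
  have hD0 : ∀ m, 0 ≤ D m := fun m => Finset.sum_nonneg fun v _ => abs_nonneg _
  -- the goal function equals D
  have hfD : (fun n2 => l1 (Matrix.vecMul μ (Pprod P n1 n2))
      (Matrix.vecMul ν (Pprod P n1 n2))) = D := by
    funext m
    simp only [l1, hDdef]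
    refine Finset.sum_congr rfl fun v _ => ?_
    rw [hwdef, Matrix.sub_vecMul, Pi.sub_apply]
  rw [hfD]
  -- monotonicity
  have hmono : ∀ m m' : ℕ, n1 ≤ m → m ≤ m' → D m' ≤ D m := by
    intro m m' hm hmm'
    induction m', hmm' using Nat.le_induction with
    | base => exact le_rfl
    | succ m' hmm' ih =>
        refine le_trans ?_ ih
        show D (m' + 1) ≤ D m'
        simp only [hDdef]
        rw [Pprod_succ P (hm.trans hmm')]
        have := l1_vecMul_le (hPstoch m') (Matrix.vecMul w (Pprod P n1 m'))
        simpa [Matrix.vecMul_vecMul] using this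
  -- the elementary bound D n1 ≤ 2
  have hD2 : D n1 ≤ 2 := by
    simp only [hDdef, Pprod_self, Matrix.vecMul_one]
    calc ∑ v, |w v| ≤ ∑ v, (μ v + ν v) := by
          refine Finset.sum_le_sum fun v _ => ?_
          rw [hwdef, Pi.sub_apply]
          exact abs_le.mpr ⟨by linarith [hμ.1 v, hν.1 v], by linarith [hμ.1 v, hν.1 v]⟩
      _ = 2 := by rw [Finset.sum_add_distrib, hμ.2, hν.2]; norm_num
  -- per-block contraction
  set K : ℕ := Fintype.card A with hK
  have hKpos : (0:ℝ) < K := by exact_mod_cast Fintype.card_pos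
  set εf : ℕ → ℝ :=
    fun k => (Real.exp (-(Real.log ((k + 1 : ℕ) : ℝ) / T₀) * Δ) / (n * K)) ^ n with hεdef
  have hεnn : ∀ k, 0 ≤ εf k := by intro k; positivity
  have hblock : ∀ k : ℕ, Pprod P (n * k) (n * (k + 1)) =
      (gibbs n E (Real.log ((k + 1 : ℕ) : ℝ) / T₀)) ^ n := by
    intro k
    rw [Nat.mul_succ]
    apply Pprod_const
    intro t ht
    have : (n * k + t) / n = k := by
      rw [Nat.mul_add_div hn, Nat.div_eq_of_lt ht, Nat.add_zero]
    simp only [hPdef, this]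
  have hQlb : ∀ k u v, εf k ≤ (Pprod P (n * k) (n * (k + 1))) u v := by
    intro k u v
    rw [hblock k]
    set β := Real.log ((k + 1 : ℕ) : ℝ) / T₀ with hβk
    refine pow_entry_lb hn _ (fun u v => (gibbs_stoch E hn β).1 u v) (by positivity)
      (fun u i b => gibbs_lb E hn (hβ k) u i b) n u v ?_
    calc (Finset.univ.filter (fun j => u j ≠ v j)).card
        ≤ Finset.univ.card := Finset.card_filter_le _ _
      _ = n := by simp
  have hcontr : ∀ k : ℕ, n1 ≤ n * k → D (n * (k + 1)) ≤ (1 - εf k) * D (n * k) := by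
    intro k hk
    have hsplit : Pprod P n1 (n * (k + 1)) =
        Pprod P n1 (n * k) * Pprod P (n * k) (n * (k + 1)) :=
      Pprod_split P hk (Nat.mul_le_mul_left n (Nat.le_succ k))
    simp only [hDdef]
    rw [hsplit]
    have hQstoch : SAStoch (Pprod P (n * k) (n * (k + 1))) := Pprod_stoch P hPstoch _ _
    have hsum0 : ∑ u, (Matrix.vecMul w (Pprod P n1 (n * k))) u = 0 := by
      rw [sum_vecMul_eq (Pprod_stoch P hPstoch n1 (n * k)) w, hwsum]
    have := l1_vecMul_contract hQstoch (hεnn k) (hQlb k)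
      (Matrix.vecMul w (Pprod P n1 (n * k))) hsum0
    simpa [Matrix.vecMul_vecMul] using this
  -- iterated bound
  have hbound : ∀ k : ℕ, n1 ≤ k →
      D (n * k) ≤ D (n * n1) * Real.exp (-(∑ j ∈ Finset.Ico n1 k, εf j)) := by
    intro k hk
    induction k, hk using Nat.le_induction with
    | base => simp
    | succ k hk ih =>
        have hk' : n1 ≤ n * k := hk.trans (Nat.le_mul_of_pos_left k hn)
        calc D (n * (k + 1)) ≤ (1 - εf k) * D (n * k) := hcontr k hk'
          _ ≤ Real.exp (-(εf k)) * (D (n * n1) * Real.exp (-(∑ j ∈ Finset.Ico n1 k, εf j))) := by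
              apply mul_le_mul _ ih (hD0 _) (Real.exp_pos _).le
              linarith [Real.add_one_le_exp (-(εf k))]
          _ = D (n * n1) * Real.exp (-(∑ j ∈ Finset.Ico n1 (k + 1), εf j)) := by
              rw [Finset.sum_Ico_succ_top hk, neg_add, Real.exp_add]
              ring
  -- lower bound on εf
  have hεlb : ∀ k : ℕ, (1 / (n * K) : ℝ) ^ n * (1 / (k + 1)) ≤ εf k := by
    intro k
    have hlog : (0:ℝ) ≤ Real.log ((k + 1 : ℕ) : ℝ) := Real.log_nonneg (by
      exact_mod_cast Nat.one_le_iff_ne_zero.mpr (Nat.succ_ne_zero k))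
    have hcast : ((k + 1 : ℕ) : ℝ) = (k : ℝ) + 1 := by push_cast; ring
    have hkpos : (0:ℝ) < (k : ℝ) + 1 := by positivity
    have step1 : εf k = Real.exp (-(Real.log ((k + 1 : ℕ) : ℝ) / T₀) * Δ * n) / (n * K) ^ n := by
      simp only [hεdef]
      rw [div_pow, ← Real.exp_nat_mul, mul_comm (n:ℝ)]
    have step2 : -(Real.log ((k + 1 : ℕ) : ℝ) / T₀) * Δ * n = -(Real.log ((k+1:ℕ):ℝ) / c) := by
      rw [hT₀]
      field_simp
    have step3 : Real.exp (-(Real.log ((k+1:ℕ):ℝ) / c)) ≥ 1 / ((k:ℝ) + 1) := by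
      have h1 : Real.log ((k + 1 : ℕ) : ℝ) / c ≤ Real.log ((k + 1 : ℕ) : ℝ) :=
        div_le_self hlog hc.le
      calc Real.exp (-(Real.log ((k+1:ℕ):ℝ) / c))
          ≥ Real.exp (-(Real.log ((k+1:ℕ):ℝ))) := Real.exp_le_exp.mpr (by linarith)
        _ = 1 / ((k:ℝ) + 1) := by
            rw [Real.exp_neg, hcast, Real.exp_log hkpos, one_div]
    rw [step1, step2]
    rw [div_pow, one_pow]
    rw [ge_iff_le] at step3
    calc (1 / (n * K : ℝ) ^ n) * (1 / ((k:ℝ) + 1))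
        ≤ (1 / (n * K : ℝ) ^ n) * Real.exp (-(Real.log ((k+1:ℕ):ℝ) / c)) := by
          apply mul_le_mul_of_nonneg_left step3 (by positivity)
      _ = Real.exp (-(Real.log ((k+1:ℕ):ℝ) / c)) / (n * K) ^ n := by ring
  -- divergence of the sum
  have hdiv : Tendsto (fun k => ∑ j ∈ Finset.Ico n1 k, εf j) atTop atTop := by
    have hC : (0:ℝ) < (1 / (n * K) : ℝ) ^ n := by positivity
    have hharm : Tendsto (fun k => ∑ j ∈ Finset.range k, (1 / ((j:ℝ) + 1))) atTop atTop :=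
      Real.tendsto_sum_range_one_div_nat_succ_atTop
    have h1 : Tendsto (fun k => (1 / (n * K) : ℝ) ^ n *
        ((∑ j ∈ Finset.range k, (1 / ((j:ℝ) + 1))) -
          (∑ j ∈ Finset.range n1, (1 / ((j:ℝ) + 1))))) atTop atTop := by
      apply Tendsto.const_mul_atTop hC
      exact tendsto_atTop_add_const_right atTop _ hharm
    apply tendsto_atTop_mono' atTop ?_ h1
    filter_upwards [eventually_ge_atTop n1] with k hk
    rw [← Finset.sum_Ico_eq_sub _ hk, Finset.mul_sum]
    refine Finset.sum_le_sum fun j _ => ?_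
    exact hεlb j
  -- conclude
  have hlim : Tendsto (fun k => D (n * n1) * Real.exp (-(∑ j ∈ Finset.Ico n1 k, εf j)))
      atTop (nhds 0) := by
    have := (Real.tendsto_exp_atBot).comp (tendsto_neg_atTop_atBot.comp hdiv)
    have h2 := this.const_mul (D (n * n1))
    simpa using h2
  rw [Metric.tendsto_atTop]
  intro η hη
  obtain ⟨Kk, hKk⟩ :=
    ((hlim.eventually (gt_mem_nhds hη)).and (eventually_ge_atTop n1)).exists
  refine ⟨n * Kk, fun m hm => ?_⟩
  have hn1nK : n1 ≤ n * Kk := hKk.2.trans (Nat.le_mul_of_pos_left Kk hn)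
  have hDm : D m ≤ D (n * Kk) := hmono (n * Kk) m hn1nK hm
  have hDK : D (n * Kk) ≤ D (n * n1) * Real.exp (-(∑ j ∈ Finset.Ico n1 Kk, εf j)) :=
    hbound Kk hKk.2
  have : D m < η := lt_of_le_of_lt (hDm.trans hDK) hKk.1
  rw [Real.dist_eq, sub_zero, abs_of_nonneg (hD0 m)]
  exact this
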